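/- Let $0 < 2H < 1$ and $\lambda > 0$. For $0 \le s \le t$, $\left| \int_s^t \int_s^r \cos(\lambda(r - r_1)) (r - r_1)^{2H}\, dr_1\, dr \right| \le C \lambda^{-2H-1} (t - s)$ for a constant $C$ depending only on $H$. -/

import Mathlib

open intervalIntegral MeasureTheory Set

lemma intg_pow (a : ℝ) (ha0 : 0 < a) (b c : ℝ) :
    IntervalIntegrable (fun v : ℝ => v ^ (a-1)) volume b c :=
  intervalIntegral.intervalIntegrable_rpow' (by linarith)

lemma intg_sin_pow (a : ℝ) (ha0 : 0 < a) (b c : ℝ) :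
    IntervalIntegrable (fun v : ℝ => Real.sin v * v ^ (a-1)) volume b c :=
  (intg_pow a ha0 b c).continuousOn_mul Real.continuous_sin.continuousOn

lemma cont_pow_pos (p : ℝ) : ContinuousOn (fun v : ℝ => v ^ p) {x : ℝ | x ≠ 0} :=
  fun x hx => (Real.continuousAt_rpow_const x p (Or.inl hx)).continuousWithinAt

lemma intg_cos_pow2 (a x : ℝ) (hx : (1:ℝ) ≤ x) :
    IntervalIntegrable (fun v : ℝ => Real.cos v * v ^ (a-2)) volume 1 x := by
  apply ContinuousOn.intervalIntegrable
  apply Real.continuous_cos.continuousOn.mul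
  apply (cont_pow_pos (a-2)).mono
  intro v hv
  have : (1:ℝ) ≤ v := by
    rcases hv with ⟨h1', h2'⟩
    simpa [inf_eq_left.mpr hx] using h1'
  simp only [mem_setOf_eq]; intro h; rw [h] at this; linarith

lemma S_small (a : ℝ) (ha0 : 0 < a) (x : ℝ) (hx0 : 0 ≤ x) (hx1 : x ≤ 1) :
    |∫ v in (0:ℝ)..x, Real.sin v * v ^ (a-1)| ≤ 1/a := by
  have h1 : |∫ v in (0:ℝ)..x, Real.sin v * v ^ (a-1)|
      ≤ ∫ v in (0:ℝ)..x, |Real.sin v * v ^ (a-1)| :=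
    intervalIntegral.abs_integral_le_integral_abs hx0
  have h2 : (∫ v in (0:ℝ)..x, |Real.sin v * v ^ (a-1)|) ≤ ∫ v in (0:ℝ)..x, v ^ (a-1) := by
    apply intervalIntegral.integral_mono_on hx0 ((intg_sin_pow a ha0 0 x).abs)
      (intg_pow a ha0 0 x)
    intro v hv
    have hv0 : 0 ≤ v := hv.1
    rw [abs_mul, abs_of_nonneg (Real.rpow_nonneg hv0 _)]
    calc |Real.sin v| * v ^ (a-1) ≤ 1 * v ^ (a-1) :=
          mul_le_mul_of_nonneg_right (Real.abs_sin_le_one v) (Real.rpow_nonneg hv0 _)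
      _ = v ^ (a-1) := one_mul _
  have h3 : (∫ v in (0:ℝ)..x, v ^ (a-1)) = x ^ a / a := by
    rw [integral_rpow (Or.inl (by linarith))]
    rw [Real.zero_rpow (by linarith : a - 1 + 1 ≠ 0)]
    ring_nf
  have h4 : x ^ a ≤ 1 := Real.rpow_le_one hx0 hx1 ha0.le
  calc |∫ v in (0:ℝ)..x, Real.sin v * v ^ (a-1)| ≤ x ^ a / a := by
        rw [← h3]; exact h1.trans h2
    _ ≤ 1/a := by gcongr

lemma S_tail (a : ℝ) (ha0 : 0 < a) (ha1 : a < 1) (x : ℝ) (hx : 1 ≤ x) :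
    |∫ v in (1:ℝ)..x, Real.sin v * v ^ (a-1)| ≤ 3 := by
  set f : ℝ → ℝ := fun v => -Real.cos v * v ^ (a-1) with hf
  have key : ∫ v in (1:ℝ)..x,
      (Real.sin v * v ^ (a-1) - (a-1) * (Real.cos v * v ^ (a-2)))
      = f x - f 1 := by
    apply intervalIntegral.integral_eq_sub_of_hasDerivAt
    · intro v hv
      have hv1 : (1:ℝ) ≤ v := by
        rcases hv with ⟨h1', _⟩
        simpa [inf_eq_left.mpr hx] using h1'
      have hv0 : v ≠ 0 := by intro h; rw [h] at hv1; linarith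
      have hd := ((Real.hasDerivAt_cos v).neg.mul
        (Real.hasDerivAt_rpow_const (p := a-1) (Or.inl hv0)))
      have he : a - 1 - 1 = a - 2 := by ring
      rw [he] at hd
      convert hd using 1
      · rfl
      · rfl
      · simp only [Pi.neg_apply]; ring
    · exact (intg_sin_pow a ha0 1 x).sub ((intg_cos_pow2 a x hx).const_mul _)
  have hsplit : (∫ v in (1:ℝ)..x, Real.sin v * v ^ (a-1))
      = f x - f 1 + (a-1) * ∫ v in (1:ℝ)..x, Real.cos v * v ^ (a-2) := by
    rw [intervalIntegral.integral_sub (intg_sin_pow a ha0 1 x)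
      ((intg_cos_pow2 a x hx).const_mul _), intervalIntegral.integral_const_mul] at key
    linarith
  have hb1 : |f x| ≤ 1 := by
    rw [hf]; simp only
    rw [abs_mul, abs_neg]
    calc |Real.cos x| * |x ^ (a-1)| ≤ 1 * 1 := by
          apply mul_le_mul (Real.abs_cos_le_one x) ?_ (abs_nonneg _) zero_le_one
          rw [abs_of_nonneg (Real.rpow_nonneg (by linarith) _)]
          exact Real.rpow_le_one_of_one_le_of_nonpos hx (by linarith)
      _ = 1 := one_mul _
  have hb2 : |f 1| ≤ 1 := by
    rw [hf]; simp only [Real.one_rpow, mul_one, abs_neg]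
    exact Real.abs_cos_le_one 1
  have hb3 : |(a-1) * ∫ v in (1:ℝ)..x, Real.cos v * v ^ (a-2)| ≤ 1 := by
    rw [abs_mul]
    have hI : |∫ v in (1:ℝ)..x, Real.cos v * v ^ (a-2)|
        ≤ ∫ v in (1:ℝ)..x, v ^ (a-2) := by
      refine (intervalIntegral.abs_integral_le_integral_abs hx).trans ?_
      apply intervalIntegral.integral_mono_on hx ((intg_cos_pow2 a x hx).abs)
      · apply ContinuousOn.intervalIntegrable
        apply (cont_pow_pos (a-2)).mono
        intro v hv
        have : (1:ℝ) ≤ v := by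
          rcases hv with ⟨h1', _⟩
          simpa [inf_eq_left.mpr hx] using h1'
        simp only [mem_setOf_eq]; intro h; rw [h] at this; linarith
      · intro v hv
        have hv0 : (0:ℝ) ≤ v := by linarith [hv.1]
        rw [abs_mul, abs_of_nonneg (Real.rpow_nonneg hv0 _)]
        calc |Real.cos v| * v ^ (a-2) ≤ 1 * v ^ (a-2) :=
              mul_le_mul_of_nonneg_right (Real.abs_cos_le_one v) (Real.rpow_nonneg hv0 _)
          _ = v ^ (a-2) := one_mul _
    have hJ : (∫ v in (1:ℝ)..x, v ^ (a-2)) = (x ^ (a-1) - 1)/(a-1) := by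
      rw [integral_rpow (Or.inr ⟨by
        intro h
        have hA : a = 1 := by linarith
        rw [hA] at ha1; exact lt_irrefl _ ha1, by
        intro h
        rcases h with ⟨h1', _⟩
        simp [inf_eq_left.mpr hx] at h1'
        linarith⟩)]
      have he2 : a - 2 + 1 = a - 1 := by ring
      rw [he2, Real.one_rpow]
    have hx1 : x ^ (a-1) ≤ 1 := Real.rpow_le_one_of_one_le_of_nonpos hx (by linarith)
    have hx2 : 0 ≤ x ^ (a-1) := Real.rpow_nonneg (by linarith) _
    rw [abs_of_neg (by linarith : a - 1 < 0)] at *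
    calc -(a-1) * |∫ v in (1:ℝ)..x, Real.cos v * v ^ (a-2)|
        ≤ -(a-1) * ((x ^ (a-1) - 1)/(a-1)) := by rw [← hJ]; nlinarith [abs_nonneg (∫ v in (1:ℝ)..x, Real.cos v * v ^ (a-2))]
      _ = 1 - x ^ (a-1) := by
          have hne : a - 1 ≠ 0 := ne_of_lt (by linarith)
          field_simp
          ring
      _ ≤ 1 := by linarith
  calc |∫ v in (1:ℝ)..x, Real.sin v * v ^ (a-1)|
      = |f x - f 1 + (a-1) * ∫ v in (1:ℝ)..x, Real.cos v * v ^ (a-2)| := by rw [hsplit]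
    _ ≤ |f x| + |f 1| + |(a-1) * ∫ v in (1:ℝ)..x, Real.cos v * v ^ (a-2)| := by
        apply (abs_add_le _ _).trans; gcongr; exact abs_sub _ _
    _ ≤ 3 := by linarith

lemma S_bound (a : ℝ) (ha0 : 0 < a) (ha1 : a < 1) (x : ℝ) (hx : 0 ≤ x) :
    |∫ v in (0:ℝ)..x, Real.sin v * v ^ (a-1)| ≤ 1/a + 3 := by
  rcases le_or_gt x 1 with h | h
  · have := S_small a ha0 x hx h
    have h3 : (0:ℝ) ≤ 3 := by norm_num
    linarith
  · have hsplit : (∫ v in (0:ℝ)..1, Real.sin v * v ^ (a-1))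
        + (∫ v in (1:ℝ)..x, Real.sin v * v ^ (a-1))
        = ∫ v in (0:ℝ)..x, Real.sin v * v ^ (a-1) :=
      intervalIntegral.integral_add_adjacent_intervals (intg_sin_pow a ha0 0 1)
        (intg_sin_pow a ha0 1 x)
    rw [← hsplit]
    have h1 := S_small a ha0 1 zero_le_one le_rfl
    have h2 := S_tail a ha0 ha1 x h.le
    calc |_ + _| ≤ _ + _ := abs_add_le _ _
      _ ≤ 1/a + 3 := by exact add_le_add h1 h2

lemma S_cont (a : ℝ) (ha0 : 0 < a) :
    Continuous (fun x : ℝ => ∫ v in (0:ℝ)..x, Real.sin v * v ^ (a-1)) :=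
  intervalIntegral.continuous_primitive (fun b c => intg_sin_pow a ha0 b c) 0

lemma I2_bound (a Y : ℝ) (ha0 : 0 < a) (ha1 : a < 1) (hY : 0 ≤ Y) :
    |∫ x in (0:ℝ)..Y, (Y - x) * (Real.sin x * x ^ (a-1))| ≤ (1/a + 3) * Y := by
  set S : ℝ → ℝ := fun x => ∫ v in (0:ℝ)..x, Real.sin v * v ^ (a-1) with hS
  have hScont : Continuous S := S_cont a ha0
  have hintS : IntervalIntegrable S volume 0 Y := hScont.intervalIntegrable 0 Y
  have hintI2 : IntervalIntegrable (fun x => (Y - x) * (Real.sin x * x ^ (a-1))) volume 0 Y :=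
    (intg_sin_pow a ha0 0 Y).continuousOn_mul
      ((continuous_const.sub continuous_id).continuousOn)
  have hintSneg : IntervalIntegrable (fun x => -(S x)) volume 0 Y :=
    (hScont.neg).intervalIntegrable 0 Y
  have key := intervalIntegral.integral_eq_sub_of_hasDeriv_right_of_le
    (f := fun x => (Y - x) * S x)
    (f' := fun x => -(S x) + (Y - x) * (Real.sin x * x ^ (a-1))) hY
    (((continuous_const.sub continuous_id).mul hScont).continuousOn)
    (by
      intro x hx
      have hx0 : 0 < x := hx.1
      have hSd : HasDerivAt S (Real.sin x * x ^ (a-1)) x := by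
        apply intervalIntegral.integral_hasDerivAt_right (intg_sin_pow a ha0 0 x)
        · apply StronglyMeasurable.stronglyMeasurableAtFilter
          apply Measurable.stronglyMeasurable
          apply measurable_of_continuousOn_compl_singleton (0:ℝ)
          exact Real.continuous_sin.continuousOn.mul (cont_pow_pos (a-1))
        · exact Real.continuous_sin.continuousAt.mul
            (Real.continuousAt_rpow_const x _ (Or.inl hx0.ne'))
      have hd := ((hasDerivAt_const x Y).sub (hasDerivAt_id x)).mul hSd
      have hd2 : HasDerivAt (fun x => (Y - x) * S x)
          (-(S x) + (Y - x) * (Real.sin x * x ^ (a-1))) x := by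
        convert hd using 1
        · rfl
        · rfl
        · rfl
        · simp only [Pi.sub_apply, Pi.mul_apply, id_eq]; ring
      exact hd2.hasDerivWithinAt)
    (hintSneg.add hintI2)
  have hSz : S 0 = 0 := intervalIntegral.integral_same
  rw [intervalIntegral.integral_add hintSneg hintI2, intervalIntegral.integral_neg] at key
  simp only [sub_self, zero_mul, sub_zero, hSz, mul_zero] at key
  have heq : (∫ x in (0:ℝ)..Y, (Y - x) * (Real.sin x * x ^ (a-1)))
      = ∫ x in (0:ℝ)..Y, S x := by linarith
  rw [heq]
  have := intervalIntegral.norm_integral_le_of_norm_le_const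
    (C := 1/a + 3) (f := S) (a := (0:ℝ)) (b := Y) ?_
  · rw [Real.norm_eq_abs] at this
    calc |∫ x in (0:ℝ)..Y, S x| ≤ (1/a+3) * |Y - 0| := this
      _ = (1/a+3) * Y := by rw [sub_zero, abs_of_nonneg hY]
  · intro x hx
    rw [Set.uIoc_of_le hY] at hx
    rw [Real.norm_eq_abs]
    exact S_bound a ha0 ha1 x hx.1.le

lemma cont_rpow (a : ℝ) (ha0 : 0 < a) : Continuous (fun x : ℝ => x ^ a) :=
  continuous_iff_continuousAt.mpr (fun x => Real.continuousAt_rpow_const x a (Or.inr ha0.le))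

lemma intg_sin_pow_a (a : ℝ) (ha0 : 0 < a) (b c : ℝ) :
    IntervalIntegrable (fun x : ℝ => Real.sin x * x ^ a) volume b c :=
  (Real.continuous_sin.mul (cont_rpow a ha0)).intervalIntegrable b c

lemma I1_bound (a Y : ℝ) (ha0 : 0 < a) (ha1 : a < 1) (hY : 0 ≤ Y) :
    |∫ x in (0:ℝ)..Y, Real.sin x * x ^ a| ≤ 2 * Y ^ a := by
  have hintJ : IntervalIntegrable (fun x : ℝ => Real.cos x * (a * x ^ (a-1))) volume 0 Y :=
    ((intg_pow a ha0 0 Y).const_mul a).continuousOn_mul Real.continuous_cos.continuousOn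
  have hintJneg : IntervalIntegrable (fun x : ℝ => -(Real.cos x * (a * x ^ (a-1)))) volume 0 Y :=
    hintJ.neg
  have key := intervalIntegral.integral_eq_sub_of_hasDeriv_right_of_le
    (f := fun x => -Real.cos x * x ^ a)
    (f' := fun x => Real.sin x * x ^ a + -(Real.cos x * (a * x ^ (a-1)))) hY
    ((Real.continuous_cos.neg.mul (cont_rpow a ha0)).continuousOn)
    (by
      intro x hx
      have hx0 : 0 < x := hx.1
      have hd := (Real.hasDerivAt_cos x).neg.mul
        (Real.hasDerivAt_rpow_const (p := a) (Or.inl hx0.ne'))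
      have hd2 : HasDerivAt (fun x => -Real.cos x * x ^ a)
          (Real.sin x * x ^ a + -(Real.cos x * (a * x ^ (a-1)))) x := by
        convert hd using 1
        · rfl
        · rfl
        · rfl
        · simp only [Pi.neg_apply]; ring
      exact hd2.hasDerivWithinAt)
    ((intg_sin_pow_a a ha0 0 Y).add hintJneg)
  rw [intervalIntegral.integral_add (intg_sin_pow_a a ha0 0 Y) hintJneg,
    intervalIntegral.integral_neg] at key
  have hz : (0:ℝ) ^ a = 0 := Real.zero_rpow ha0.ne'
  have heq : (∫ x in (0:ℝ)..Y, Real.sin x * x ^ a)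
      = -Real.cos Y * Y ^ a + a * ∫ x in (0:ℝ)..Y, Real.cos x * x ^ (a-1) := by
    have hcongr : (∫ x in (0:ℝ)..Y, Real.cos x * (a * x ^ (a-1)))
        = a * ∫ x in (0:ℝ)..Y, Real.cos x * x ^ (a-1) := by
      rw [← intervalIntegral.integral_const_mul]
      apply intervalIntegral.integral_congr
      intro x _; ring
    rw [hcongr] at key
    simp only [hz, Real.cos_zero, mul_zero, sub_zero, neg_zero, zero_mul, neg_mul,
      one_mul] at key
    linarith
  have hJb : |∫ x in (0:ℝ)..Y, Real.cos x * x ^ (a-1)| ≤ Y ^ a / a := by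
    have h1 : |∫ x in (0:ℝ)..Y, Real.cos x * x ^ (a-1)|
        ≤ ∫ x in (0:ℝ)..Y, x ^ (a-1) := by
      refine (intervalIntegral.abs_integral_le_integral_abs hY).trans ?_
      apply intervalIntegral.integral_mono_on hY
        (((intg_pow a ha0 0 Y).continuousOn_mul Real.continuous_cos.continuousOn).abs)
        (intg_pow a ha0 0 Y)
      intro v hv
      rw [abs_mul, abs_of_nonneg (Real.rpow_nonneg hv.1 _)]
      calc |Real.cos v| * v ^ (a-1) ≤ 1 * v ^ (a-1) :=
            mul_le_mul_of_nonneg_right (Real.abs_cos_le_one v) (Real.rpow_nonneg hv.1 _)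
        _ = v ^ (a-1) := one_mul _
    have h3 : (∫ v in (0:ℝ)..Y, v ^ (a-1)) = Y ^ a / a := by
      rw [integral_rpow (Or.inl (by linarith))]
      rw [Real.zero_rpow (by linarith : a - 1 + 1 ≠ 0)]
      have : a - 1 + 1 = a := by ring
      rw [this]; ring
    rw [← h3]; exact h1
  rw [heq]
  have hYa : 0 ≤ Y ^ a := Real.rpow_nonneg hY a
  calc |(-Real.cos Y * Y ^ a) + a * ∫ x in (0:ℝ)..Y, Real.cos x * x ^ (a-1)|
      ≤ |(-Real.cos Y * Y ^ a)| + |a * ∫ x in (0:ℝ)..Y, Real.cos x * x ^ (a-1)| := abs_add_le _ _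
    _ ≤ Y ^ a + a * (Y ^ a / a) := by
        apply add_le_add
        · rw [abs_mul, abs_neg]
          calc |Real.cos Y| * |Y ^ a| ≤ 1 * |Y ^ a| :=
                mul_le_mul_of_nonneg_right (Real.abs_cos_le_one Y) (abs_nonneg _)
            _ = Y ^ a := by rw [one_mul, abs_of_nonneg hYa]
        · rw [abs_mul, abs_of_nonneg ha0.le]
          exact mul_le_mul_of_nonneg_left hJb ha0.le
    _ = 2 * Y ^ a := by field_simp; ring

lemma A_bound (a Y : ℝ) (ha0 : 0 < a) (ha1 : a < 1) (hY : 0 ≤ Y) :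
    |∫ x in (0:ℝ)..Y, (Y - x) * (Real.cos x * x ^ a)| ≤ 6 * Y := by
  rcases le_or_gt Y 1 with hY1 | hY1
  · -- small case : integrand bounded by Y
    have h := intervalIntegral.norm_integral_le_of_norm_le_const
      (C := Y) (f := fun x => (Y - x) * (Real.cos x * x ^ a)) (a := (0:ℝ)) (b := Y) ?_
    · rw [Real.norm_eq_abs, sub_zero, abs_of_nonneg hY] at h
      nlinarith
    · intro x hx
      rw [Set.uIoc_of_le hY] at hx
      obtain ⟨hx0, hxY⟩ := hx
      rw [Real.norm_eq_abs, abs_mul, abs_mul]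
      have h1 : |Y - x| ≤ Y := by rw [abs_of_nonneg (by linarith)]; linarith
      have h2 : |Real.cos x| ≤ 1 := Real.abs_cos_le_one x
      have h3 : |x ^ a| ≤ 1 := by
        rw [abs_of_nonneg (Real.rpow_nonneg hx0.le _)]
        exact Real.rpow_le_one hx0.le (by linarith) ha0.le
      calc |Y - x| * (|Real.cos x| * |x ^ a|) ≤ Y * (1 * 1) := by
            apply mul_le_mul h1 ?_ (by positivity) hY
            exact mul_le_mul h2 h3 (abs_nonneg _) zero_le_one
        _ = Y := by ring
  · -- big case : integrate by parts
    have hintA : IntervalIntegrable (fun x => (Y - x) * (Real.cos x * x ^ a)) volume 0 Y :=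
      ((continuous_const.sub continuous_id).mul
        (Real.continuous_cos.mul (cont_rpow a ha0))).intervalIntegrable 0 Y
    have hintI1 : IntervalIntegrable (fun x : ℝ => Real.sin x * x ^ a) volume 0 Y :=
      intg_sin_pow_a a ha0 0 Y
    have hintI2 : IntervalIntegrable
        (fun x => a * ((Y - x) * (Real.sin x * x ^ (a-1)))) volume 0 Y :=
      ((intg_sin_pow a ha0 0 Y).continuousOn_mul
        ((continuous_const.sub continuous_id).continuousOn)).const_mul a
    have hintI1neg : IntervalIntegrable (fun x => -(Real.sin x * x ^ a)) volume 0 Y :=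
      (Real.continuous_sin.mul (cont_rpow a ha0)).neg.intervalIntegrable 0 Y
    have key := intervalIntegral.integral_eq_sub_of_hasDeriv_right_of_le
      (f := fun x => (Y - x) * (Real.sin x * x ^ a))
      (f' := fun x => -(Real.sin x * x ^ a) + ((Y - x) * (Real.cos x * x ^ a)
        + a * ((Y - x) * (Real.sin x * x ^ (a-1))))) hY
      (((continuous_const.sub continuous_id).mul
        (Real.continuous_sin.mul (cont_rpow a ha0))).continuousOn)
      (by
        intro x hx
        have hx0 : 0 < x := hx.1
        have hd := ((hasDerivAt_const x Y).sub (hasDerivAt_id x)).mul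
          ((Real.hasDerivAt_sin x).mul
            (Real.hasDerivAt_rpow_const (p := a) (Or.inl hx0.ne')))
        have hd2 : HasDerivAt (fun x => (Y - x) * (Real.sin x * x ^ a))
            (-(Real.sin x * x ^ a) + ((Y - x) * (Real.cos x * x ^ a)
              + a * ((Y - x) * (Real.sin x * x ^ (a-1))))) x := by
          convert hd using 1
          · rfl
          · rfl
          · rfl
          · simp only [Pi.sub_apply, Pi.mul_apply, id_eq]; ring
        exact hd2.hasDerivWithinAt)
      (hintI1neg.add (hintA.add hintI2))
    beta_reduce at key
    rw [intervalIntegral.integral_add hintI1neg (hintA.add hintI2),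
      intervalIntegral.integral_add hintA hintI2,
      intervalIntegral.integral_neg, intervalIntegral.integral_const_mul] at key
    have hz : (0:ℝ) ^ a = 0 := Real.zero_rpow ha0.ne'
    simp only [sub_self, zero_mul, Real.sin_zero, hz, mul_zero, sub_zero] at key
    -- key : -(∫ sin x x^a) + (A + a * I2) = 0
    have hA : (∫ x in (0:ℝ)..Y, (Y - x) * (Real.cos x * x ^ a))
        = (∫ x in (0:ℝ)..Y, Real.sin x * x ^ a)
          - a * ∫ x in (0:ℝ)..Y, (Y - x) * (Real.sin x * x ^ (a-1)) := by linarith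
    have h1 := I1_bound a Y ha0 ha1 hY
    have h2 := I2_bound a Y ha0 ha1 hY
    have hYa : Y ^ a ≤ Y := by
      calc Y ^ a ≤ Y ^ (1:ℝ) := Real.rpow_le_rpow_of_exponent_le hY1.le ha1.le
        _ = Y := Real.rpow_one Y
    rw [hA]
    have habs2 : |a * ∫ x in (0:ℝ)..Y, (Y - x) * (Real.sin x * x ^ (a-1))|
        ≤ a * ((1/a + 3) * Y) := by
      rw [abs_mul, abs_of_nonneg ha0.le]
      exact mul_le_mul_of_nonneg_left h2 ha0.le
    have hstep : a * ((1/a + 3) * Y) = (1 + 3*a) * Y := by field_simp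
    calc |(∫ x in (0:ℝ)..Y, Real.sin x * x ^ a)
          - a * ∫ x in (0:ℝ)..Y, (Y - x) * (Real.sin x * x ^ (a-1))|
        ≤ |∫ x in (0:ℝ)..Y, Real.sin x * x ^ a|
          + |a * ∫ x in (0:ℝ)..Y, (Y - x) * (Real.sin x * x ^ (a-1))| := abs_sub _ _
      _ ≤ 2 * Y ^ a + (1 + 3*a) * Y := by rw [← hstep]; exact add_le_add h1 habs2
      _ ≤ 2 * Y + (1 + 3*1) * Y := by nlinarith
      _ ≤ 6 * Y := by linarith

lemma tri_identity (f : ℝ → ℝ) (hf : Continuous f) (T : ℝ) :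
    (∫ w in (0:ℝ)..T, (∫ u in (0:ℝ)..w, f u))
      = ∫ u in (0:ℝ)..T, (T - u) * f u := by
  set G : ℝ → ℝ := fun w => ∫ u in (0:ℝ)..w, f u with hG
  have hGcont : Continuous G :=
    intervalIntegral.continuous_primitive (fun b c => hf.intervalIntegrable b c) 0
  have hGd : ∀ y : ℝ, HasDerivAt G (f y) y := by
    intro y
    exact intervalIntegral.integral_hasDerivAt_right (hf.intervalIntegrable 0 y)
      (hf.stronglyMeasurable.stronglyMeasurableAtFilter) hf.continuousAt
  have hufd : ∀ y : ℝ, HasDerivAt (fun T => ∫ u in (0:ℝ)..T, u * f u) (y * f y) y := by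
    intro y
    exact intervalIntegral.integral_hasDerivAt_right
      ((continuous_id.mul hf).intervalIntegrable 0 y)
      ((continuous_id.mul hf).stronglyMeasurable.stronglyMeasurableAtFilter)
      (continuous_id.mul hf).continuousAt
  set Φ : ℝ → ℝ := fun T => (∫ w in (0:ℝ)..T, G w)
    - (T * G T - ∫ u in (0:ℝ)..T, u * f u) with hΦ
  have hΦd : ∀ y : ℝ, HasDerivAt Φ 0 y := by
    intro y
    have h1 : HasDerivAt (fun T : ℝ => ∫ w in (0:ℝ)..T, G w) (G y) y :=
      intervalIntegral.integral_hasDerivAt_right (hGcont.intervalIntegrable 0 y)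
        (hGcont.stronglyMeasurable.stronglyMeasurableAtFilter) hGcont.continuousAt
    have h2 : HasDerivAt (fun T : ℝ => T * G T) (G y + y * f y) y := by
      have := (hasDerivAt_id y).mul (hGd y)
      convert this using 1
      · rfl
      · rfl
      · rfl
      · simp [id_eq]
    have h3 := (h2.sub (hufd y))
    have h4 := h1.sub h3
    convert h4 using 1
    · rfl
    · rfl
    · rfl
    · ring
  have hconst : Φ T = Φ 0 :=
    is_const_of_deriv_eq_zero (fun y => (hΦd y).differentiableAt)
      (fun y => (hΦd y).deriv) T 0
  have hΦ0 : Φ 0 = 0 := by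
    simp [hΦ, hG]
  have hmain : (∫ w in (0:ℝ)..T, G w)
      = T * G T - ∫ u in (0:ℝ)..T, u * f u := by
    have := hconst; rw [hΦ0] at this
    simp only [hΦ] at this
    linarith
  rw [hmain]
  have hid : Continuous (fun x : ℝ => x * f x) := continuous_id.mul hf
  have hrhs : (∫ u in (0:ℝ)..T, (T - u) * f u)
      = (∫ u in (0:ℝ)..T, T * f u) - ∫ u in (0:ℝ)..T, u * f u := by
    rw [← intervalIntegral.integral_sub ((by fun_prop : Continuous fun u => T * f u).intervalIntegrable 0 T)
      (hid.intervalIntegrable 0 T)]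
    apply intervalIntegral.integral_congr
    intro x _; simp; ring
  rw [hrhs, intervalIntegral.integral_const_mul]


/-- Double-integral estimate: for `0 < 2H < 1` there is a constant `C = C(H)` with
`|∫ s..t ∫ s..r cos(λ(r-r₁))(r-r₁)^{2H} dr₁ dr| ≤ C λ^{-2H-1}(t-s)`. -/
theorem stmt_11 (H : ℝ) (hH : H ∈ Set.Ioo (0:ℝ) (1/2)) :
    ∃ C : ℝ, 0 < C ∧ ∀ lam s t : ℝ, 0 < lam → 0 ≤ s → s ≤ t →
      |∫ r in s..t, ∫ r1 in s..r, Real.cos (lam * (r - r1)) * (r - r1) ^ (2*H)|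
        ≤ C * lam ^ (-2*H - 1) * (t - s) := by
  obtain ⟨hH0, hH1⟩ := hH
  refine ⟨6, by norm_num, ?_⟩
  intro lam s t hlam hs hst
  set a := 2 * H with ha
  have ha0 : 0 < a := by rw [ha]; linarith
  have ha1 : a < 1 := by rw [ha]; linarith
  set T := t - s with hT
  have hT0 : 0 ≤ T := by rw [hT]; linarith
  have hf : Continuous (fun u : ℝ => Real.cos (lam * u) * u ^ a) :=
    (Real.continuous_cos.comp (continuous_const.mul continuous_id)).mul (cont_rpow a ha0)
  -- rewrite inner integral
  have hinner : ∀ r : ℝ, (∫ r1 in s..r, Real.cos (lam * (r - r1)) * (r - r1) ^ a)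
      = ∫ u in (0:ℝ)..(r - s), Real.cos (lam * u) * u ^ a := by
    intro r
    have h := intervalIntegral.integral_comp_sub_left (a := s) (b := r)
      (fun u => Real.cos (lam * u) * u ^ a) r
    simpa [sub_self] using h
  have houter : (∫ r in s..t, ∫ r1 in s..r, Real.cos (lam*(r-r1)) * (r-r1) ^ a)
      = ∫ w in (0:ℝ)..T, ∫ u in (0:ℝ)..w, Real.cos (lam*u) * u ^ a := by
    rw [intervalIntegral.integral_congr (fun r _ => hinner r)]
    have h := intervalIntegral.integral_comp_sub_right (a := s) (b := t)
      (fun w => ∫ u in (0:ℝ)..w, Real.cos (lam*u) * u ^ a) s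
    simpa [sub_self] using h
  rw [houter, tri_identity _ hf T]
  -- scaling u = x / lam
  have hlamne : lam ≠ 0 := hlam.ne'
  have hYnn : 0 ≤ lam * T := by positivity
  have h5 := intervalIntegral.integral_comp_div (a := (0:ℝ)) (b := lam*T) (c := lam)
    (f := fun u => (T - u) * (Real.cos (lam*u) * u ^ a)) hlamne
  rw [zero_div, mul_div_cancel_left₀ _ hlamne, smul_eq_mul] at h5
  have hmain : (∫ u in (0:ℝ)..T, (T - u) * (Real.cos (lam*u) * u ^ a))
      = lam⁻¹ * ∫ x in (0:ℝ)..(lam*T),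
          (T - x/lam) * (Real.cos (lam*(x/lam)) * (x/lam) ^ a) := by
    rw [h5]; field_simp
    apply intervalIntegral.integral_congr; intro u _; ring
  have hpt : Set.EqOn
      (fun x => (T - x/lam) * (Real.cos (lam*(x/lam)) * (x/lam) ^ a))
      (fun x => (lam⁻¹ * (lam ^ a)⁻¹) * ((lam*T - x) * (Real.cos x * x ^ a)))
      (Set.uIcc 0 (lam*T)) := by
    intro x hx
    rw [Set.uIcc_of_le hYnn] at hx
    have hx0 : 0 ≤ x := hx.1
    have e1 : lam * (x/lam) = x := by field_simp
    have e2 : (x/lam) ^ a = x ^ a / lam ^ a := Real.div_rpow hx0 hlam.le a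
    have e3 : T - x/lam = (lam * T - x) / lam := by field_simp
    simp only [e1, e2, e3]
    field_simp
  have hcm : (∫ x in (0:ℝ)..(lam*T),
        (lam⁻¹ * (lam ^ a)⁻¹) * ((lam*T - x) * (Real.cos x * x ^ a)))
      = (lam⁻¹ * (lam ^ a)⁻¹) * ∫ x in (0:ℝ)..(lam*T),
          (lam*T - x) * (Real.cos x * x ^ a) :=
    intervalIntegral.integral_const_mul _ _
  rw [hmain, intervalIntegral.integral_congr hpt, hcm]
  have hAb := A_bound a (lam*T) ha0 ha1 hYnn
  have hpos1 : (0:ℝ) < lam⁻¹ := by positivity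
  have hpos2 : (0:ℝ) < (lam ^ a)⁻¹ := by positivity
  have hexp : lam ^ (-2*H - 1) = (lam ^ a)⁻¹ * lam⁻¹ := by
    have e : -2*H - 1 = (-a) + (-1) := by rw [ha]; ring
    rw [e, Real.rpow_add hlam, Real.rpow_neg_one, Real.rpow_neg hlam.le]
  rw [abs_mul, abs_mul, abs_of_pos hpos1, abs_of_pos (by positivity : (0:ℝ) < lam⁻¹ * (lam ^ a)⁻¹)]
  calc lam⁻¹ * (lam⁻¹ * (lam ^ a)⁻¹ *
        |∫ x in (0:ℝ)..(lam*T), (lam*T - x) * (Real.cos x * x ^ a)|)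
      ≤ lam⁻¹ * (lam⁻¹ * (lam ^ a)⁻¹ * (6 * (lam * T))) := by
        apply mul_le_mul_of_nonneg_left ?_ hpos1.le
        exact mul_le_mul_of_nonneg_left hAb (by positivity)
    _ = 6 * lam ^ (-2*H - 1) * T := by
        rw [hexp]; field_simp
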